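/- (Laguerre-domain causality of the delay.) Let 0 < p < 1, τ ≥ 1, m ≥ 1, let u : ℕ → ℝ be square-summable with Laguerre spectrum satisfying u_k = 0 for all k < m, and define y(t) = u(t−τ) for t ≥ τ, y(t) = 0 for t < τ. Then the Laguerre spectrum of y satisfies y_j = 0 for all j < m and y_m = (√p)^τ·u_m. -/

import Mathlib

/-- The discrete Laguerre functions `ℓ_j(t; p)` in time-domain. -/
noncomputable def discreteLaguerre (p : ℝ) : ℕ → ℕ → ℝ
  | 0, t => Real.sqrt (1 - p) * Real.sqrt p ^ t
  | j + 1, 0 => -Real.sqrt p * discreteLaguerre p j 0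
  | j + 1, t + 1 =>
      Real.sqrt p * discreteLaguerre p (j + 1) t + discreteLaguerre p j t
        - Real.sqrt p * discreteLaguerre p j (t + 1)
  termination_by j t => (j, t)

namespace DLaux

lemma rec_zero (p : ℝ) (t : ℕ) :
    discreteLaguerre p 0 t = Real.sqrt (1 - p) * Real.sqrt p ^ t := by
  rw [discreteLaguerre]

lemma rec_succ_zero (p : ℝ) (j : ℕ) :
    discreteLaguerre p (j + 1) 0 = -Real.sqrt p * discreteLaguerre p j 0 := by
  conv_lhs => rw [discreteLaguerre]

lemma rec_succ_succ (p : ℝ) (j t : ℕ) :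
    discreteLaguerre p (j + 1) (t + 1) =
      Real.sqrt p * discreteLaguerre p (j + 1) t + discreteLaguerre p j t
        - Real.sqrt p * discreteLaguerre p j (t + 1) := by
  conv_lhs => rw [discreteLaguerre]

noncomputable def shiftL : (ℕ → ℝ) →ₗ[ℝ] (ℕ → ℝ) where
  toFun f := fun t => f (t + 1)
  map_add' _ _ := rfl
  map_smul' _ _ := rfl

lemma shiftL_apply (f : ℕ → ℝ) (t : ℕ) : shiftL f t = f (t + 1) := rfl

lemma shiftL_pow_apply (τ : ℕ) (f : ℕ → ℝ) (t : ℕ) : (shiftL ^ τ) f t = f (t + τ) := by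
  induction τ generalizing f t with
  | zero => simp
  | succ n ih =>
    rw [pow_succ, Module.End.mul_apply, ih, shiftL_apply]
    rfl

/-- span of the first `j` Laguerre functions -/
noncomputable def S (p : ℝ) (j : ℕ) : Submodule ℝ (ℕ → ℝ) :=
  Submodule.span ℝ (Set.range fun k : Fin j => discreteLaguerre p k)

lemma mem_S_of_lt {p : ℝ} {k j : ℕ} (h : k < j) : discreteLaguerre p k ∈ S p j :=
  Submodule.subset_span ⟨⟨k, h⟩, rfl⟩

lemma S_mono {p : ℝ} {j j' : ℕ} (h : j ≤ j') : S p j ≤ S p j' := by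
  rw [S, Submodule.span_le]
  rintro _ ⟨k, rfl⟩
  exact mem_S_of_lt (lt_of_lt_of_le k.2 h)

lemma shift_one (p : ℝ) (j : ℕ) :
    shiftL (discreteLaguerre p j) - Real.sqrt p • discreteLaguerre p j ∈ S p j := by
  induction j with
  | zero =>
    have : shiftL (discreteLaguerre p 0) - Real.sqrt p • discreteLaguerre p 0 = 0 := by
      funext t
      simp only [Pi.sub_apply, Pi.smul_apply, smul_eq_mul, shiftL_apply, rec_zero, Pi.zero_apply]
      ring
    rw [this]; exact zero_mem _
  | succ j ih =>
    have key : shiftL (discreteLaguerre p (j+1)) - Real.sqrt p • discreteLaguerre p (j+1)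
        = (1 - Real.sqrt p ^ 2) • discreteLaguerre p j
          - Real.sqrt p • (shiftL (discreteLaguerre p j) - Real.sqrt p • discreteLaguerre p j) := by
      funext t
      simp only [Pi.sub_apply, Pi.smul_apply, smul_eq_mul, shiftL_apply]
      rw [rec_succ_succ]
      ring
    rw [key]
    exact sub_mem (Submodule.smul_mem _ _ (mem_S_of_lt (Nat.lt_succ_self j)))
      (Submodule.smul_mem _ _ (S_mono (Nat.le_succ j) ih))

lemma shift_S {p : ℝ} {j : ℕ} {s : ℕ → ℝ} (hs : s ∈ S p j) : shiftL s ∈ S p j := by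
  have hle : S p j ≤ (S p j).comap shiftL := by
    rw [S, Submodule.span_le]
    rintro _ ⟨k, rfl⟩
    simp only [SetLike.mem_coe, Submodule.mem_comap]
    have h1 := shift_one p k
    have h2 : shiftL (discreteLaguerre p (k : ℕ))
        = Real.sqrt p • discreteLaguerre p (k : ℕ)
          + (shiftL (discreteLaguerre p (k : ℕ)) - Real.sqrt p • discreteLaguerre p (k : ℕ)) := by
      abel
    rw [h2]
    exact add_mem (Submodule.smul_mem _ _ (mem_S_of_lt k.2)) (S_mono (le_of_lt k.2) h1)
  exact hle hs

lemma shift_tau (p : ℝ) (τ j : ℕ) :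
    (shiftL ^ τ) (discreteLaguerre p j) - Real.sqrt p ^ τ • discreteLaguerre p j ∈ S p j := by
  induction τ with
  | zero => simp
  | succ n ih =>
    have key : (shiftL ^ (n+1)) (discreteLaguerre p j) - Real.sqrt p ^ (n+1) • discreteLaguerre p j
        = shiftL ((shiftL ^ n) (discreteLaguerre p j) - Real.sqrt p ^ n • discreteLaguerre p j)
          + Real.sqrt p ^ n • (shiftL (discreteLaguerre p j)
              - Real.sqrt p • discreteLaguerre p j) := by
      funext t
      simp only [Pi.sub_apply, Pi.smul_apply, smul_eq_mul, Pi.add_apply, shiftL_apply,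
        map_sub, map_smul, shiftL_pow_apply]
      rw [show t + (n + 1) = t + 1 + n by omega]
      ring
    rw [key]
    exact add_mem (shift_S ih) (Submodule.smul_mem _ _ (shift_one p j))

lemma laguerre_abs_bound (p : ℝ) (hp0 : 0 < p) (hp1 : p < 1) (j : ℕ) :
    ∃ C : ℝ, 0 ≤ C ∧
      ∀ t : ℕ, |discreteLaguerre p j t| ≤ C * ((t : ℝ) + 1) ^ j * Real.sqrt p ^ t := by
  have hq0 : 0 < Real.sqrt p := Real.sqrt_pos.2 hp0
  have hq1 : Real.sqrt p < 1 := by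
    rw [show (1:ℝ) = Real.sqrt 1 by simp]
    exact Real.sqrt_lt_sqrt (le_of_lt hp0) hp1
  set q := Real.sqrt p with hq
  induction j with
  | zero =>
    refine ⟨Real.sqrt (1 - p), Real.sqrt_nonneg _, fun t => ?_⟩
    rw [rec_zero, abs_of_nonneg (by positivity), pow_zero, mul_one]
  | succ j ih =>
    obtain ⟨C, hC0, hC⟩ := ih
    refine ⟨C * (q + 1) / q, by positivity, fun t => ?_⟩
    set D : ℝ := C * (q + 1) / q with hD
    have hD1 : q * D = C * (q + 1) := by rw [hD, mul_div_assoc']; exact mul_div_cancel_left₀ _ hq0.ne'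
    have hD0 : 0 ≤ D := by positivity
    induction t with
    | zero =>
      rw [rec_succ_zero, abs_mul, abs_neg, abs_of_pos hq0]
      have h0 := hC 0
      simp only [Nat.cast_zero, zero_add, one_pow, pow_zero, mul_one] at h0 ⊢
      nlinarith [abs_nonneg (discreteLaguerre p j 0), h0, hD1, hC0, hq0.le, hq1.le]
    | succ t iht =>
      have h2 := hC t
      have h3 := hC (t + 1)
      rw [pow_succ q t] at h3
      push_cast at h3 iht ⊢
      set A : ℝ := (t : ℝ) + 1 with hA
      have hA0 : (0:ℝ) < A := by positivity
      have hqt : (0:ℝ) < q ^ t := pow_pos hq0 t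
      have hApow : (0:ℝ) ≤ (A + 1) ^ j := by positivity
      rw [rec_succ_succ]
      have h1 : |q * discreteLaguerre p (j+1) t + discreteLaguerre p j t
            - q * discreteLaguerre p j (t+1)|
          ≤ q * |discreteLaguerre p (j+1) t| + |discreteLaguerre p j t|
            + q * |discreteLaguerre p j (t+1)| := by
        calc |q * discreteLaguerre p (j+1) t + discreteLaguerre p j t
              - q * discreteLaguerre p j (t+1)|
            ≤ |q * discreteLaguerre p (j+1) t + discreteLaguerre p j t|
              + |q * discreteLaguerre p j (t+1)| := abs_sub _ _
          _ ≤ |q * discreteLaguerre p (j+1) t| + |discreteLaguerre p j t|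
              + |q * discreteLaguerre p j (t+1)| := by
              gcongr
              exact abs_add_le _ _
          _ = q * |discreteLaguerre p (j+1) t| + |discreteLaguerre p j t|
              + q * |discreteLaguerre p j (t+1)| := by
              rw [abs_mul, abs_mul, abs_of_pos hq0]
      refine h1.trans ?_
      have hpowle : A ^ j ≤ (A + 1) ^ j := by gcongr <;> linarith
      have hpow2 : A ^ (j+1) + (A + 1) ^ j ≤ (A + 1) ^ (j+1) := by
        have h4 : A ^ (j+1) ≤ A * (A + 1) ^ j := by
          rw [pow_succ]
          nlinarith [pow_nonneg hA0.le j, hpowle]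
        have h5 : (A + 1) ^ (j+1) = A * (A + 1) ^ j + (A + 1) ^ j := by
          rw [pow_succ]; ring
        linarith
      calc q * |discreteLaguerre p (j+1) t| + |discreteLaguerre p j t|
            + q * |discreteLaguerre p j (t+1)|
          ≤ q * (D * A ^ (j+1) * q ^ t) + C * A ^ j * q ^ t
              + q * (C * (A + 1) ^ j * (q ^ t * q)) := by
            have a1 := mul_le_mul_of_nonneg_left iht hq0.le
            have a3 := mul_le_mul_of_nonneg_left h3 hq0.le
            linarith
        _ = C * (q + 1) * A ^ (j+1) * q ^ t + C * A ^ j * q ^ t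
              + C * (A + 1) ^ j * q ^ t * q * q := by
            have e : q * (D * A ^ (j+1) * q ^ t) = (q * D) * A ^ (j+1) * q ^ t := by ring
            rw [e, hD1]; ring
        _ ≤ C * (q + 1) * A ^ (j+1) * q ^ t + C * (A + 1) ^ j * q ^ t
              + C * (A + 1) ^ j * q ^ t * q := by
            have b1 : C * A ^ j * q ^ t ≤ C * (A + 1) ^ j * q ^ t := by
              gcongr <;> linarith
            have b2 : C * (A + 1) ^ j * q ^ t * q * q ≤ C * (A + 1) ^ j * q ^ t * q := by
              nlinarith [mul_nonneg (mul_nonneg (mul_nonneg hC0 hApow) hqt.le) hq0.le, hq1.le]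
            linarith
        _ = C * (q + 1) * (A ^ (j+1) + (A + 1) ^ j) * q ^ t := by ring
        _ ≤ C * (q + 1) * (A + 1) ^ (j+1) * q ^ t := by gcongr
        _ = D * (A + 1) ^ (j+1) * q ^ (t+1) := by
            rw [pow_succ, ← hD1]; ring

lemma laguerre_sq_summable (p : ℝ) (hp0 : 0 < p) (hp1 : p < 1) (j : ℕ) :
    Summable fun t : ℕ => (discreteLaguerre p j t) ^ 2 := by
  obtain ⟨C, hC0, hC⟩ := laguerre_abs_bound p hp0 hp1 j
  have hbase : Summable fun n : ℕ => (n : ℝ) ^ (2 * j) * p ^ n :=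
    summable_pow_mul_geometric_of_norm_lt_one (2 * j)
      (by rw [Real.norm_eq_abs, abs_of_pos hp0]; exact hp1)
  have hshift : Summable fun n : ℕ => ((n : ℝ) + 1) ^ (2 * j) * p ^ (n + 1) := by
    have := hbase.comp_injective (add_left_injective 1)
    refine this.congr fun n => ?_
    simp only [Function.comp_apply]
    push_cast
    ring
  have hmaj : Summable fun n : ℕ => (C ^ 2 / p) * (((n : ℝ) + 1) ^ (2 * j) * p ^ (n + 1)) :=
    hshift.mul_left _
  refine hmaj.of_nonneg_of_le (fun t => sq_nonneg _) (fun t => ?_)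
  have h1 := hC t
  have h2 : (discreteLaguerre p j t) ^ 2
      ≤ (C * ((t : ℝ) + 1) ^ j * Real.sqrt p ^ t) ^ 2 := by
    rw [← sq_abs]
    exact pow_le_pow_left₀ (abs_nonneg _) h1 2
  refine h2.trans (le_of_eq ?_)
  have hsq : (Real.sqrt p ^ t) ^ 2 = p ^ t := by
    rw [← pow_mul, mul_comm t 2, pow_mul, Real.sq_sqrt hp0.le]
  have : (C * ((t : ℝ) + 1) ^ j * Real.sqrt p ^ t) ^ 2
      = C ^ 2 * ((t : ℝ) + 1) ^ (2 * j) * p ^ t := by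
    rw [mul_pow, mul_pow, hsq, ← pow_mul, mul_comm j 2]
  rw [this, pow_succ]
  field_simp
  ring

lemma mul_laguerre_summable (p : ℝ) (hp0 : 0 < p) (hp1 : p < 1) (u : ℕ → ℝ)
    (hu : Summable fun t => u t ^ 2) (j : ℕ) :
    Summable fun t : ℕ => u t * discreteLaguerre p j t := by
  have hsq := laguerre_sq_summable p hp0 hp1 j
  have habs : Summable fun t : ℕ => |u t * discreteLaguerre p j t| := by
    refine (hu.add hsq).of_nonneg_of_le (fun t => abs_nonneg _) (fun t => ?_)
    rw [abs_mul]
    nlinarith [sq_nonneg (|u t| - |discreteLaguerre p j t|), sq_abs (u t),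
      sq_abs (discreteLaguerre p j t), abs_nonneg (u t), abs_nonneg (discreteLaguerre p j t)]
  exact habs.of_abs

end DLaux

/-- Laguerre-domain "causality" of the delay: if the first `m` Laguerre coefficients
of the input vanish, so do the first `m` Laguerre coefficients of the delayed output,
and the `m`-th output coefficient equals `(√p)^τ · u_m`. -/
theorem delay_laguerre_causality (p : ℝ) (hp0 : 0 < p) (hp1 : p < 1)
    (τ : ℕ) (hτ : 1 ≤ τ) (m : ℕ) (hm : 1 ≤ m)
    (u : ℕ → ℝ) (hu : Summable fun t => u t ^ 2)
    (huk : ∀ k : ℕ, k < m → (∑' t : ℕ, u t * discreteLaguerre p k t) = 0)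
    (y : ℕ → ℝ) (hy : ∀ t : ℕ, y t = if t < τ then 0 else u (t - τ)) :
    (∀ j : ℕ, j < m → (∑' t : ℕ, y t * discreteLaguerre p j t) = 0) ∧
      (∑' t : ℕ, y t * discreteLaguerre p m t) =
        Real.sqrt p ^ τ * ∑' t : ℕ, u t * discreteLaguerre p m t := by
  have key : ∀ j : ℕ, j ≤ m →
      (∑' t : ℕ, y t * discreteLaguerre p j t)
        = Real.sqrt p ^ τ * ∑' t : ℕ, u t * discreteLaguerre p j t := by
    intro j hj
    have hmem := DLaux.shift_tau p τ j
    rw [DLaux.S, Submodule.mem_span_range_iff_exists_fun] at hmem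
    obtain ⟨c, hc⟩ := hmem
    have hdecomp : ∀ t : ℕ, discreteLaguerre p j (t + τ)
        = Real.sqrt p ^ τ * discreteLaguerre p j t
          + ∑ i : Fin j, c i * discreteLaguerre p (i : ℕ) t := by
      intro t
      have h := congrFun hc t
      simp only [Finset.sum_apply, Pi.smul_apply, smul_eq_mul, Pi.sub_apply,
        DLaux.shiftL_pow_apply] at h
      linarith
    have hinj : Function.Injective (fun s : ℕ => s + τ) := add_left_injective τ
    have hsupp : Function.support (fun t : ℕ => y t * discreteLaguerre p j t)
        ⊆ Set.range (fun s : ℕ => s + τ) := by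
      intro x hx
      by_contra hxr
      apply hx
      have hxlt : x < τ := by
        by_contra h
        exact hxr ⟨x - τ, show x - τ + τ = x by omega⟩
      simp only
      rw [hy x, if_pos hxlt, zero_mul]
    have h1 : (∑' s : ℕ, y (s + τ) * discreteLaguerre p j (s + τ))
        = ∑' t : ℕ, y t * discreteLaguerre p j t := hinj.tsum_eq hsupp
    have h2 : ∀ s : ℕ, y (s + τ) = u s := by
      intro s
      rw [hy, if_neg (by omega)]
      congr 1
      omega
    have hsumm : ∀ k : ℕ, Summable fun t : ℕ => u t * discreteLaguerre p k t :=
      fun k => DLaux.mul_laguerre_summable p hp0 hp1 u hu k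
    calc (∑' t : ℕ, y t * discreteLaguerre p j t)
        = ∑' s : ℕ, u s * discreteLaguerre p j (s + τ) := by
          rw [← h1]
          exact tsum_congr fun s => by rw [h2]
      _ = ∑' s : ℕ, (Real.sqrt p ^ τ * (u s * discreteLaguerre p j s)
            + ∑ i : Fin j, c i * (u s * discreteLaguerre p (i : ℕ) s)) := by
          refine tsum_congr fun s => ?_
          rw [hdecomp s, mul_add, Finset.mul_sum]
          congr 1
          · ring
          · exact Finset.sum_congr rfl fun i _ => by ring
      _ = Real.sqrt p ^ τ * (∑' s : ℕ, u s * discreteLaguerre p j s)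
            + ∑ i : Fin j, c i * ∑' s : ℕ, u s * discreteLaguerre p (i : ℕ) s := by
          have hA : Summable fun s : ℕ =>
              Real.sqrt p ^ τ * (u s * discreteLaguerre p j s) := (hsumm j).mul_left _
          have hB : ∀ i : Fin j, Summable fun s : ℕ =>
              c i * (u s * discreteLaguerre p (i : ℕ) s) := fun i => (hsumm i).mul_left _
          have hB' : Summable fun s : ℕ =>
              ∑ i : Fin j, c i * (u s * discreteLaguerre p (i : ℕ) s) :=
            summable_sum fun i _ => hB i
          rw [Summable.tsum_add hA hB', tsum_mul_left, Summable.tsum_finsetSum (fun i _ => hB i)]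
          congr 1
          exact Finset.sum_congr rfl fun i _ => tsum_mul_left
      _ = Real.sqrt p ^ τ * ∑' s : ℕ, u s * discreteLaguerre p j s := by
          have hz : ∀ i : Fin j, (∑' s : ℕ, u s * discreteLaguerre p (i : ℕ) s) = 0 :=
            fun i => huk i (lt_of_lt_of_le i.2 hj)
          simp [hz]
  refine ⟨fun j hj => ?_, key m le_rfl⟩
  rw [key j (le_of_lt hj), huk j hj, mul_zero]
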